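/- For every α > 0 and ε > 0 there exists a constant c = c(α, ε) such that the following holds for all sufficiently large n. Let G be an n-vertex graph such that every pair of disjoint vertex sets X, Y ⊆ V(G) with |X| = |Y| = ⌈ε·n/2⌉ satisfies e_G(X, Y) ≥ c·n. Assign each edge of G a colour chosen independently and uniformly at random from {1, …, ⌈(1+α)·n⌉}. Then with probability 1 − o(1) (as n → ∞, uniformly over all such G), for every pair of disjoint vertex sets X, Y ⊆ V(G) with |X| = |Y| = ⌈ε·n/2⌉, the edges between X and Y receive at least n distinct colours. -/

import Mathlib

open MeasureTheory

/-- The number of ordered pairs `(x, y) ∈ X × Y` with `x` adjacent to `y` in `G`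
(for disjoint `X` and `Y` this is the number of edges between `X` and `Y`). -/
noncomputable def eXY {n : ℕ} (G : SimpleGraph (Fin n)) (X Y : Finset (Fin n)) : ℕ :=
  {q : Fin n × Fin n | q.1 ∈ X ∧ q.2 ∈ Y ∧ G.Adj q.1 q.2}.ncard

/-- The set of edges of `G` with one endpoint in `X` and the other in `Y`. -/
def betweenEdges {n : ℕ} (G : SimpleGraph (Fin n)) (X Y : Finset (Fin n)) :
    Set (Sym2 (Fin n)) :=
  {e | e ∈ G.edgeSet ∧ ∃ x ∈ X, ∃ y ∈ Y, e = s(x, y)}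

/-- The distribution of a uniformly random colouring of all pairs of vertices of `Fin n`
with colours from `Fin r`: the product of independent uniform colours. -/
noncomputable def colourMeasure (n r : ℕ) : Measure (Sym2 (Fin n) → Fin r) :=
  Measure.pi fun _ => (r : ENNReal)⁻¹ • Measure.count

instance (r : ℕ) : IsFiniteMeasure ((r : ENNReal)⁻¹ • Measure.count : Measure (Fin r)) := by
  constructor
  rcases Nat.eq_zero_or_pos r with h | h
  · subst h; simp [Measure.count_univ]
  · simp only [Measure.smul_apply, Measure.count_univ, smul_eq_mul, Nat.card_eq_fintype_card,
      Fintype.card_fin]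
    exact ENNReal.mul_lt_top (ENNReal.inv_lt_top.2 (by exact_mod_cast h)) (by simp)

lemma colour_prob (n r : ℕ) (h : 0 < r) : IsProbabilityMeasure (colourMeasure n r) := by
  constructor
  rw [colourMeasure, Measure.pi_univ]
  simp [Measure.count_univ, ENNReal.inv_mul_cancel, h.ne', ENNReal.natCast_ne_top]

lemma measure_all_in (n r : ℕ) (h : 0 < r) (S : Finset (Sym2 (Fin n))) (T : Finset (Fin r)) :
    colourMeasure n r {ψ | ∀ e ∈ S, ψ e ∈ T}
      = ((r : ENNReal)⁻¹ * T.card) ^ S.card := by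
  have hset : {ψ : Sym2 (Fin n) → Fin r | ∀ e ∈ S, ψ e ∈ T}
      = Set.pi Set.univ (fun e => if e ∈ S then (T : Set (Fin r)) else Set.univ) := by
    ext ψ
    simp only [Set.mem_setOf_eq, Set.mem_pi, Set.mem_univ, forall_true_left]
    constructor
    · intro hψ e; split <;> simp_all
    · intro hψ e he; have := hψ e; simp_all
  rw [hset, colourMeasure, Measure.pi_pi]
  have : ∀ e : Sym2 (Fin n), ((r : ENNReal)⁻¹ • Measure.count : Measure (Fin r))
      (if e ∈ S then (T : Set (Fin r)) else Set.univ)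
      = if e ∈ S then (r : ENNReal)⁻¹ * T.card else 1 := by
    intro e; split
    · simp [Measure.count_apply_finset]
    · simp [Measure.count_univ, ENNReal.inv_mul_cancel, h.ne', ENNReal.natCast_ne_top]
  simp only [this]
  rw [Finset.prod_ite_mem]
  simp

lemma eXY_le_ncard {n : ℕ} (G : SimpleGraph (Fin n)) (X Y : Finset (Fin n))
    (hD : Disjoint X Y) : eXY G X Y ≤ (betweenEdges G X Y).ncard := by
  classical
  set P : Set (Fin n × Fin n) := {q | q.1 ∈ X ∧ q.2 ∈ Y ∧ G.Adj q.1 q.2}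
  have hinj : Set.InjOn (fun q : Fin n × Fin n => s(q.1, q.2)) P := by
    rintro ⟨a, b⟩ ⟨ha, hb, hab⟩ ⟨c, d⟩ ⟨hc, hd, hcd⟩ h
    simp only [Sym2.eq, Sym2.rel_iff', Prod.mk.injEq] at h
    rcases h with ⟨h1, h2⟩ | ⟨h1, h2⟩
    · simp [h1, h2]
    · exact absurd rfl (hD.forall_ne_finset ha hd)
  have himg : (fun q : Fin n × Fin n => s(q.1, q.2)) '' P ⊆ betweenEdges G X Y := by
    rintro e ⟨⟨a, b⟩, ⟨ha, hb, hab⟩, rfl⟩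
    exact ⟨hab, a, ha, b, hb, rfl⟩
  calc eXY G X Y = ((fun q : Fin n × Fin n => s(q.1, q.2)) '' P).ncard :=
        (Set.ncard_image_of_injOn hinj).symm
    _ ≤ (betweenEdges G X Y).ncard := Set.ncard_le_ncard himg (Set.toFinite _)

lemma choose_le_two_pow' (r k : ℕ) : r.choose k ≤ 2 ^ r := by
  rcases le_or_gt k r with h | h
  · calc r.choose k ≤ ∑ m ∈ Finset.range (r+1), r.choose m :=
        Finset.single_le_sum (fun _ _ => Nat.zero_le _) (Finset.mem_range.2 (by omega))
      _ = 2 ^ r := Nat.sum_range_choose r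
  · simp [Nat.choose_eq_zero_of_lt h]

/-- **Many colours across dense cuts under random colourings.**
For every `α, ε > 0` there is a constant `c` such that for all sufficiently large `n`
(uniformly over all such graphs): if every pair of disjoint vertex sets of size
`⌈ε·n/2⌉` in the `n`-vertex graph `G` spans at least `c·n` edges, then colouring the
edges of `G` independently and uniformly at random with `⌈(1+α)·n⌉` colours yields,
with probability at least `1 - δ`, at least `n` distinct colours between every pair of
disjoint vertex sets of size `⌈ε·n/2⌉`. -/
theorem many_colours_across_cuts (α ε : ℝ) (hα : 0 < α) (hε : 0 < ε) :
    ∃ c : ℝ, ∀ δ : ℝ, 0 < δ → ∃ N : ℕ, ∀ n, N ≤ n →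
      ∀ G : SimpleGraph (Fin n),
        (∀ X Y : Finset (Fin n), Disjoint X Y →
          X.card = ⌈ε * n / 2⌉₊ → Y.card = ⌈ε * n / 2⌉₊ →
          c * n ≤ (eXY G X Y : ℝ)) →
        1 - ENNReal.ofReal δ ≤
          colourMeasure n ⌈(1 + α) * (n : ℝ)⌉₊
            {ψ | ∀ X Y : Finset (Fin n), Disjoint X Y →
              X.card = ⌈ε * n / 2⌉₊ → Y.card = ⌈ε * n / 2⌉₊ →
              n ≤ (ψ '' betweenEdges G X Y).ncard} := by
  classical
  have h1α : (0:ℝ) < 1 + α := by linarith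
  set β := Real.log (1 + α) with hβdef
  have hβpos : 0 < β := Real.log_pos (by linarith)
  set c : ℝ := ((3 + α) * Real.log 2 + 1) / β with hcdef
  have hlog2 : (0:ℝ) ≤ Real.log 2 := Real.log_nonneg (by norm_num)
  refine ⟨c, ?_⟩
  intro δ hδ
  refine ⟨max 1 ⌈Real.log (2 / δ)⌉₊, ?_⟩
  intro n hn G hG
  have hn1 : 1 ≤ n := le_trans (le_max_left _ _) hn
  have hnlog : Real.log (2 / δ) ≤ (n : ℝ) := by
    calc Real.log (2 / δ) ≤ (⌈Real.log (2 / δ)⌉₊ : ℝ) := Nat.le_ceil _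
      _ ≤ (n : ℝ) := by exact_mod_cast le_trans (le_max_right _ _) hn
  set r := ⌈(1 + α) * (n : ℝ)⌉₊ with hrdef
  have hrn : (1 + α) * n ≤ (r : ℝ) := Nat.le_ceil _
  have hnr : n ≤ r := by
    have h1 : (n : ℝ) ≤ (1 + α) * n := by nlinarith [Nat.cast_nonneg (α := ℝ) n]
    exact_mod_cast h1.trans hrn
  have hrpos : 0 < r := lt_of_lt_of_le hn1 hnr
  have hrposR : (0:ℝ) < r := by exact_mod_cast hrpos
  haveI : IsProbabilityMeasure (colourMeasure n r) := colour_prob n r hrpos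
  set μ := colourMeasure n r with hμdef
  set k := ⌈ε * n / 2⌉₊ with hkdef
  set m0 := ⌈c * n⌉₊ with hm0def
  set Q : ENNReal := ENNReal.ofReal (1 / (1 + α)) with hQdef
  have hQ1 : Q ≤ 1 := by
    rw [hQdef]
    exact ENNReal.ofReal_le_one.2 (by rw [div_le_one h1α]; linarith)
  -- the per-pair events
  set E : Finset (Fin n) × Finset (Fin n) → Set (Sym2 (Fin n) → Fin r) :=
    fun p => {ψ | Disjoint p.1 p.2 ∧ p.1.card = k ∧ p.2.card = k ∧
      (ψ '' betweenEdges G p.1 p.2).ncard < n} with hEdef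
  set good : Set (Sym2 (Fin n) → Fin r) :=
    {ψ | ∀ X Y : Finset (Fin n), Disjoint X Y →
        X.card = k → Y.card = k →
        n ≤ (ψ '' betweenEdges G X Y).ncard} with hgooddef
  have hcompl : goodᶜ ⊆ ⋃ p ∈ (Finset.univ : Finset (Finset (Fin n) × Finset (Fin n))),
      E p := by
    intro ψ hψ
    simp only [hgooddef, Set.mem_compl_iff, Set.mem_setOf_eq, not_forall] at hψ
    obtain ⟨X, Y, hD, h1, h2, h3⟩ := hψ
    exact Set.mem_biUnion (Finset.mem_univ (X, Y)) ⟨hD, h1, h2, Nat.lt_of_not_le h3⟩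
  -- bound for each pair
  have hE : ∀ p : Finset (Fin n) × Finset (Fin n), μ (E p) ≤ 2 ^ r * Q ^ m0 := by
    intro p
    by_cases hp : Disjoint p.1 p.2 ∧ p.1.card = k ∧ p.2.card = k
    · obtain ⟨hD, hX, hY⟩ := hp
      have hSfin : (betweenEdges G p.1 p.2).Finite := Set.toFinite _
      set Sfin := hSfin.toFinset with hSfindef
      have hm : m0 ≤ Sfin.card := by
        have h1 : c * n ≤ (eXY G p.1 p.2 : ℝ) := hG p.1 p.2 hD hX hY
        have h2 : eXY G p.1 p.2 ≤ (betweenEdges G p.1 p.2).ncard := eXY_le_ncard G p.1 p.2 hD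
        have h3 : (betweenEdges G p.1 p.2).ncard = Sfin.card :=
          Set.ncard_eq_toFinset_card _ hSfin
        rw [hm0def]
        refine Nat.ceil_le.2 (h1.trans ?_)
        have h4 : eXY G p.1 p.2 ≤ Sfin.card := h3 ▸ h2
        exact_mod_cast Nat.cast_le.2 h4
      have hsub : E p ⊆ ⋃ T ∈ Finset.univ.powersetCard (n - 1),
          {ψ : Sym2 (Fin n) → Fin r | ∀ e ∈ Sfin, ψ e ∈ T} := by
        intro ψ hψ
        obtain ⟨-, -, -, hlt⟩ := hψ
        have hIfin : (ψ '' betweenEdges G p.1 p.2).Finite := Set.toFinite _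
        have hIcard : hIfin.toFinset.card ≤ n - 1 := by
          have h5 : (ψ '' betweenEdges G p.1 p.2).ncard = hIfin.toFinset.card :=
            Set.ncard_eq_toFinset_card _ hIfin
          omega
        obtain ⟨T, hsubT, -, hTcard⟩ := Finset.exists_subsuperset_card_eq
          (Finset.subset_univ hIfin.toFinset) hIcard
          (by simp only [Finset.card_univ, Fintype.card_fin]; omega)
        refine Set.mem_biUnion (Finset.mem_powersetCard_univ.2 hTcard) ?_
        intro e he
        refine hsubT ?_
        rw [Set.Finite.mem_toFinset]
        exact ⟨e, (Set.Finite.mem_toFinset hSfin).1 he, rfl⟩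
      calc μ (E p) ≤ ∑ T ∈ Finset.univ.powersetCard (n - 1),
            μ {ψ : Sym2 (Fin n) → Fin r | ∀ e ∈ Sfin, ψ e ∈ T} :=
          le_trans (measure_mono hsub) (measure_biUnion_finset_le _ _)
        _ ≤ ∑ T ∈ Finset.univ.powersetCard (n - 1), Q ^ m0 := by
            refine Finset.sum_le_sum ?_
            intro T hT
            rw [hμdef, measure_all_in n r hrpos]
            have hTcard : T.card = n - 1 := (Finset.mem_powersetCard_univ.1 hT)
            have hbase : (r : ENNReal)⁻¹ * ((n - 1 : ℕ) : ENNReal) ≤ Q := by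
              have h1 : ((n - 1 : ℕ) : ℝ) * (1 + α) ≤ r := by
                have h6 : ((n - 1 : ℕ) : ℝ) ≤ (n : ℝ) := by exact_mod_cast Nat.sub_le n 1
                nlinarith
              have hreal : (r : ℝ)⁻¹ * ((n - 1 : ℕ) : ℝ) ≤ 1 / (1 + α) := by
                rw [mul_comm, ← div_eq_mul_inv, div_le_div_iff₀ hrposR h1α]
                linarith
              calc (r : ENNReal)⁻¹ * ((n - 1 : ℕ) : ENNReal)
                  = ENNReal.ofReal ((r : ℝ)⁻¹ * ((n - 1 : ℕ) : ℝ)) := by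
                    rw [ENNReal.ofReal_mul (by positivity),
                      ENNReal.ofReal_inv_of_pos hrposR, ENNReal.ofReal_natCast,
                      ENNReal.ofReal_natCast]
                _ ≤ Q := ENNReal.ofReal_le_ofReal hreal
            rw [hTcard]
            calc ((r : ENNReal)⁻¹ * ((n - 1 : ℕ) : ENNReal)) ^ Sfin.card ≤ Q ^ Sfin.card :=
                pow_le_pow_left₀ zero_le hbase _
              _ ≤ Q ^ m0 := pow_le_pow_of_le_one zero_le hQ1 hm
        _ = (Finset.univ.powersetCard (n-1)).card • (Q ^ m0) := by
            rw [Finset.sum_const]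
        _ ≤ 2 ^ r * Q ^ m0 := by
            rw [Finset.card_powersetCard, Finset.card_univ, Fintype.card_fin, nsmul_eq_mul]
            refine mul_le_mul_left ?_ _
            exact_mod_cast choose_le_two_pow' r (n-1)
    · have : E p = ∅ := by
        ext ψ; simp only [hEdef, Set.mem_setOf_eq, Set.mem_empty_iff_false, iff_false]
        tauto
      simp [this]
  -- sum over pairs
  have hbad : μ goodᶜ ≤ 2 ^ n * 2 ^ n * (2 ^ r * Q ^ m0) := by
    calc μ goodᶜ ≤ ∑ p ∈ (Finset.univ : Finset (Finset (Fin n) × Finset (Fin n))), μ (E p) :=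
        le_trans (measure_mono hcompl) (measure_biUnion_finset_le _ _)
      _ ≤ ∑ _p ∈ (Finset.univ : Finset (Finset (Fin n) × Finset (Fin n))),
            (2 ^ r * Q ^ m0 : ENNReal) := Finset.sum_le_sum fun p _ => hE p
      _ = (2 ^ n * 2 ^ n : ℕ) * (2 ^ r * Q ^ m0) := by
          rw [Finset.sum_const, Finset.card_univ, nsmul_eq_mul]
          congr 1
          simp [Fintype.card_finset]
      _ = 2 ^ n * 2 ^ n * (2 ^ r * Q ^ m0) := by push_cast; ring
  -- numeric bound
  have hnum : (2:ENNReal) ^ n * 2 ^ n * (2 ^ r * Q ^ m0) ≤ ENNReal.ofReal δ := by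
    have heq : (2:ENNReal) ^ n * 2 ^ n * (2 ^ r * Q ^ m0)
        = ENNReal.ofReal (2 ^ n * 2 ^ n * (2 ^ r * (1 / (1 + α)) ^ m0)) := by
      rw [hQdef, ENNReal.ofReal_mul (by positivity), ENNReal.ofReal_mul (by positivity),
        ENNReal.ofReal_mul (by positivity), ENNReal.ofReal_pow (by norm_num),
        ENNReal.ofReal_pow (by norm_num), ENNReal.ofReal_pow (by positivity),
        ENNReal.ofReal_ofNat]
    rw [heq]
    refine ENNReal.ofReal_le_ofReal ?_
    -- real inequality
    have hLpos : (0:ℝ) < 2 ^ n * 2 ^ n * (2 ^ r * (1 / (1 + α)) ^ m0) := by positivity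
    rw [← Real.log_le_log_iff hLpos hδ]
    have hlogL : Real.log (2 ^ n * 2 ^ n * (2 ^ r * (1 / (1 + α)) ^ m0))
        = n * Real.log 2 + n * Real.log 2 + (r * Real.log 2 - m0 * β) := by
      rw [Real.log_mul (by positivity) (by positivity),
        Real.log_mul (by positivity) (by positivity),
        Real.log_mul (by positivity) (by positivity),
        Real.log_pow, Real.log_pow, Real.log_pow, one_div, Real.log_inv, hβdef]
      push_cast; ring
    rw [hlogL]
    have hrle : (r : ℝ) ≤ (1 + α) * n + 1 := le_of_lt (Nat.ceil_lt_add_one (by positivity))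
    have hm0ge : c * n ≤ (m0 : ℝ) := Nat.le_ceil _
    have hcβ : c * β = (3 + α) * Real.log 2 + 1 := div_mul_cancel₀ _ hβpos.ne'
    have hlogδ : Real.log 2 - Real.log δ ≤ (n:ℝ) := by
      rwa [Real.log_div (by norm_num) hδ.ne'] at hnlog
    have hm0β : c * n * β ≤ m0 * β := mul_le_mul_of_nonneg_right hm0ge hβpos.le
    have hrlog : (r:ℝ) * Real.log 2 ≤ ((1 + α) * n + 1) * Real.log 2 :=
      mul_le_mul_of_nonneg_right hrle hlog2
    nlinarith [Nat.cast_nonneg (α := ℝ) n]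
  -- wrap up
  have hgoodmeas : MeasurableSet goodᶜ := (Set.to_countable _).measurableSet
  have hfinal : μ good = 1 - μ goodᶜ := by
    have h7 := measure_compl (μ := μ) hgoodmeas (measure_ne_top μ _)
    rw [compl_compl, measure_univ] at h7
    exact h7
  calc (1 : ENNReal) - ENNReal.ofReal δ ≤ 1 - μ goodᶜ :=
      tsub_le_tsub_left (hbad.trans hnum) 1
    _ = μ good := hfinal.symm
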